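/- The set of (ε,φ)-concentrated functions on Ω is not closed under subtraction: there exist f, g both (ε,φ)-concentrated on Ω (i.e., ⟨H_{Ω,φ}h,h⟩ ≥ (1−ε)‖h‖₂² for h = f,g) such that f − g is not (ε,φ)-concentrated on Ω. Concretely, if ψ_M is an eigenfunction with eigenvalue α_M > 1−ε and h = Σ_k c_kψ_k with 0 < c_M < (1−ε)/α_M, Σ|c_k|² = 1, Σα_k|c_k|² = 1−ηε for some 1 < η < 1/ε, then for δ with 0 < δ ≤ 2c_M(α_M−(1−ε))/(ε(η−1)), both ψ_M and f = ψ_M + δh are (ε,φ)-concentrated but f − ψ_M = δh is not. -/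

import Mathlib

open scoped ComplexInnerProductSpace

lemma aux_coef {H : Type*} [NormedAddCommGroup H] [InnerProductSpace ℂ H]
    (ψ : ℕ → H) (hψ : Orthonormal ℂ ψ) (a : ℕ → ℂ) (x : H)
    (hx : HasSum (fun k => a k • ψ k) x) (k : ℕ) : ⟪ψ k, x⟫ = a k := by
  have h1 : HasSum (fun j => ⟪ψ k, a j • ψ j⟫) ⟪ψ k, x⟫ := (innerSL ℂ (ψ k)).hasSum hx
  have h2 : HasSum (fun j => ⟪ψ k, a j • ψ j⟫) (a k) := by
    have : (fun j => ⟪ψ k, a j • ψ j⟫) = fun j => if j = k then a k else 0 := by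
      funext j
      rw [inner_smul_right, orthonormal_iff_ite.mp hψ]
      by_cases hjk : j = k <;> simp [hjk]; intro hkj; exact absurd hkj.symm hjk
    rw [this]
    exact hasSum_ite_eq k (a k)
  exact h1.unique h2

lemma aux_mulconj (z : ℂ) : z * (starRingEnd ℂ) z = ((‖z‖ ^ 2 : ℝ) : ℂ) := by
  rw [Complex.mul_conj]; norm_cast
  rw [← Complex.sq_norm]

theorem stmt14
    {H : Type*} [NormedAddCommGroup H] [InnerProductSpace ℂ H] [CompleteSpace H]
    (ψ : ℕ → H) (hψ : Orthonormal ℂ ψ)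
    (α : ℕ → ℝ) (hα : ∀ k, 0 < α k ∧ α k ≤ 1)
    (T : H →L[ℂ] H) (hsa : IsSelfAdjoint T)
    (heig : ∀ k, T (ψ k) = (α k : ℂ) • ψ k)
    (ε : ℝ) (hε0 : 0 < ε) (hε1 : ε < 1)
    (M : ℕ) (hαM : 1 - ε < α M)
    (c : ℕ → ℂ) (t : ℝ) (hcM : c M = (t : ℂ))
    (ht0 : 0 < t) (ht1 : t < (1 - ε) / α M)
    (h : H) (hh : HasSum (fun k => c k • ψ k) h)
    (hnorm : ∑' k, ‖c k‖ ^ 2 = 1)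
    (η : ℝ) (hη1 : 1 < η) (hη2 : η < 1 / ε)
    (hηconc : ∑' k, α k * ‖c k‖ ^ 2 = 1 - η * ε)
    (δ : ℝ) (hδ0 : 0 < δ) (hδ : δ ≤ 2 * t * (α M - (1 - ε)) / (ε * (η - 1))) :
    ((1 - ε) * ‖ψ M‖ ^ 2 ≤ (⟪ψ M, T (ψ M)⟫).re) ∧
    ((1 - ε) * ‖ψ M + δ • h‖ ^ 2 ≤ (⟪ψ M + δ • h, T (ψ M + δ • h)⟫).re) ∧
    ¬ ((1 - ε) * ‖(ψ M + δ • h) - ψ M‖ ^ 2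
        ≤ (⟪(ψ M + δ • h) - ψ M, T ((ψ M + δ • h) - ψ M)⟫).re) := by
  have hαM0 : 0 < α M := (hα M).1
  have hψM1 : ‖ψ M‖ = 1 := hψ.1 M
  have hηε : η * ε < 1 := (lt_div_iff₀ hε0).mp hη2
  have hδs : (δ : ℝ) • h = ((δ : ℂ)) • h := (algebraMap_smul ℂ δ h).symm
  have hcoef : ∀ k, ⟪ψ k, h⟫ = c k := aux_coef ψ hψ c h hh
  have hcoef' : ∀ k, ⟪h, ψ k⟫ = (starRingEnd ℂ) (c k) := by
    intro k; rw [← inner_conj_symm, hcoef k]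
  have hTh : HasSum (fun k => (c k * (α k : ℂ)) • ψ k) (T h) := by
    have h0 := T.hasSum hh
    have he : (fun k => T (c k • ψ k)) = fun k => (c k * (α k : ℂ)) • ψ k := by
      funext k; rw [map_smul, heig, smul_smul]
    rwa [he] at h0
  have hcoefT : ∀ k, ⟪ψ k, T h⟫ = c k * (α k : ℂ) := aux_coef ψ hψ _ _ hTh
  -- summability
  have hsum1 : Summable (fun k => ‖c k‖ ^ 2) := by
    by_contra hs; rw [tsum_eq_zero_of_not_summable hs] at hnorm; norm_num at hnorm
  have hsum2 : Summable (fun k => α k * ‖c k‖ ^ 2) := by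
    by_contra hs; rw [tsum_eq_zero_of_not_summable hs] at hηconc; linarith
  have hhs1 : HasSum (fun k => ‖c k‖ ^ 2) 1 := hnorm ▸ hsum1.hasSum
  have hhs2 : HasSum (fun k => α k * ‖c k‖ ^ 2) (1 - η * ε) := hηconc ▸ hsum2.hasSum
  have hhc1 : HasSum (fun k => ((‖c k‖ ^ 2 : ℝ) : ℂ)) ((1 : ℝ) : ℂ) :=
    Complex.ofRealCLM.hasSum hhs1
  have hhc2 : HasSum (fun k => ((α k * ‖c k‖ ^ 2 : ℝ) : ℂ)) ((1 - η * ε : ℝ) : ℂ) :=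
    Complex.ofRealCLM.hasSum hhs2
  -- ⟪h,h⟫
  have hinner_hh : ⟪h, h⟫ = ((1 : ℝ) : ℂ) := by
    have h1 : HasSum (fun k => c k * ⟪h, ψ k⟫) ⟪h, h⟫ := by
      simpa [inner_smul_right] using (innerSL ℂ h).hasSum hh
    have h2 : (fun k => c k * ⟪h, ψ k⟫) = fun k => ((‖c k‖ ^ 2 : ℝ) : ℂ) := by
      funext k; rw [hcoef' k, aux_mulconj]
    rw [h2] at h1
    exact h1.unique hhc1
  have hh2 : ‖h‖ ^ 2 = 1 := by
    have h0 := inner_self_eq_norm_sq (𝕜 := ℂ) h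
    rw [hinner_hh] at h0
    simpa using h0.symm
  -- ⟪h, T h⟫
  have hinner_hTh : ⟪h, T h⟫ = ((1 - η * ε : ℝ) : ℂ) := by
    have h1 : HasSum (fun k => (c k * (α k : ℂ)) * ⟪h, ψ k⟫) ⟪h, T h⟫ := by
      simpa [inner_smul_right] using (innerSL ℂ h).hasSum hTh
    have h2 : (fun k => (c k * (α k : ℂ)) * ⟪h, ψ k⟫)
        = fun k => ((α k * ‖c k‖ ^ 2 : ℝ) : ℂ) := by
      funext k
      rw [hcoef' k, mul_comm (c k) ((α k : ℂ)), mul_assoc, aux_mulconj]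
      push_cast; ring
    rw [h2] at h1
    exact h1.unique hhc2
  -- small inners
  have hψψ : ⟪ψ M, ψ M⟫ = ((1 : ℝ) : ℂ) := by
    rw [inner_self_eq_norm_sq_to_K (𝕜 := ℂ), hψM1]; norm_num
  have hψMh : ⟪ψ M, h⟫ = ((t : ℝ) : ℂ) := by rw [hcoef M, hcM]
  have hhψM : ⟪h, ψ M⟫ = ((t : ℝ) : ℂ) := by
    rw [hcoef' M, hcM, Complex.conj_ofReal]
  have hψTψ : ⟪ψ M, T (ψ M)⟫ = ((α M : ℝ) : ℂ) := by
    rw [heig M, inner_smul_right, hψψ]; norm_num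
  have hψMTh : ⟪ψ M, T h⟫ = ((t * α M : ℝ) : ℂ) := by
    rw [hcoefT M, hcM]; push_cast; ring
  have hhTψM : ⟪h, T (ψ M)⟫ = ((α M * t : ℝ) : ℂ) := by
    rw [heig M, inner_smul_right, hhψM]; push_cast; ring
  refine ⟨?_, ?_, ?_⟩
  · rw [hψTψ, hψM1]; simp; linarith
  · have e2 : ⟪ψ M + δ • h, T (ψ M + δ • h)⟫
        = ((α M + 2 * δ * t * α M + δ ^ 2 * (1 - η * ε) : ℝ) : ℂ) := by
      rw [hδs]
      simp only [map_add, map_smul, inner_add_left, inner_add_right, inner_smul_left,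
        inner_smul_right, hψTψ, hψMTh, hhTψM, hinner_hTh, Complex.conj_ofReal]
      push_cast; ring
    have n2 : ‖ψ M + δ • h‖ ^ 2 = 1 + 2 * (δ * t) + δ ^ 2 := by
      rw [norm_add_sq (𝕜 := ℂ), hδs, inner_smul_right, hψMh, hψM1, norm_smul]
      simp [abs_of_pos hδ0, mul_pow, hh2]
    rw [e2, n2, Complex.ofReal_re]
    have hkey : δ * (ε * (η - 1)) ≤ 2 * t * (α M - (1 - ε)) := by
      have hpos : 0 < ε * (η - 1) := mul_pos hε0 (by linarith)
      exact (le_div_iff₀ hpos).mp hδ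
    nlinarith [mul_le_mul_of_nonneg_left hkey hδ0.le, mul_pos hδ0 ht0, hαM]
  · have hsub : (ψ M + δ • h) - ψ M = δ • h := add_sub_cancel_left _ _
    rw [hsub, hδs]
    have e3 : ⟪(δ : ℂ) • h, T ((δ : ℂ) • h)⟫ = ((δ ^ 2 * (1 - η * ε) : ℝ) : ℂ) := by
      simp only [map_smul, inner_smul_left, inner_smul_right, hinner_hTh, Complex.conj_ofReal]
      push_cast; ring
    have n3 : ‖(δ : ℂ) • h‖ ^ 2 = δ ^ 2 := by
      rw [norm_smul]; simp [mul_pow, hh2, Complex.norm_of_nonneg hδ0.le]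
    rw [e3, n3, Complex.ofReal_re]
    push_neg
    nlinarith [mul_pos (mul_pos hδ0 hδ0) (mul_pos hε0 (sub_pos.mpr hη1))]
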